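/- For any real θ, ∑_{n=−∞}^∞ 2^{−n(n−1)/2}·2^{−θn} = 2^{1/8}·√(2π/log 2)·2^{−θ(1−θ)/2}·(1 + 2·∑_{k=1}^∞ e^{−2k²π²/log 2}·cos(2kπ(1/2 − θ))). -/

import Mathlib

open Real

/-- Poisson summation for the Gaussian: for any real `θ`,
`∑_{n∈ℤ} 2^{-n(n-1)/2} 2^{-θn}
  = 2^{1/8} √(2π/log 2) 2^{-θ(1-θ)/2} (1 + 2 ∑_{k=1}^∞ e^{-2k²π²/log 2} cos(2kπ(1/2-θ)))`
(the sum over `k` is indexed here from `0`, with `k + 1` in place of `k`). -/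
lemma sum_exp_nat {c : ℝ} (hc : 0 < c) : Summable (fun n : ℕ ↦ Real.exp (-c * (n:ℝ)^2)) := by
  refine Summable.of_nonneg_of_le (fun n ↦ (Real.exp_pos _).le) (fun n ↦ ?_)
    (summable_geometric_of_lt_one (Real.exp_pos (-c)).le (Real.exp_lt_one_iff.mpr (by linarith)))
  rw [← Real.exp_nat_mul]
  apply Real.exp_le_exp.mpr
  have : (n:ℝ) ≤ (n:ℝ)^2 := by
    rcases Nat.eq_zero_or_pos n with h | h
    · simp [h]
    · have : (1:ℝ) ≤ (n:ℝ) := by exact_mod_cast h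
      nlinarith
  nlinarith

theorem gaussian_poisson_summation (θ : ℝ) :
    ∑' n : ℤ, (2 : ℝ) ^ (-((n : ℝ) * ((n : ℝ) - 1)) / 2) * (2 : ℝ) ^ (-θ * (n : ℝ)) =
      (2 : ℝ) ^ ((1 : ℝ) / 8) * Real.sqrt (2 * π / Real.log 2) *
        (2 : ℝ) ^ (-θ * (1 - θ) / 2) *
        (1 + 2 * ∑' k : ℕ,
          Real.exp (-2 * ((k : ℝ) + 1) ^ 2 * π ^ 2 / Real.log 2) *
            Real.cos (2 * ((k : ℝ) + 1) * π * (1 / 2 - θ))) := by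
  have hL : 0 < Real.log 2 := Real.log_pos one_lt_two
  have hπ : 0 < π := Real.pi_pos
  have hπ' : (π:ℂ) ≠ 0 := by exact_mod_cast hπ.ne'
  set L := Real.log 2 with hLdef
  set c : ℝ := 2 * π ^ 2 / L with hcdef
  have hc : 0 < c := by positivity
  set b : ℝ := L * (1/2 - θ) / (2 * π) with hbdef
  have ha : (0:ℝ) < L / (2 * π) := by positivity
  -- summability over ℕ and ℤ
  have hS1 : Summable (fun n : ℕ ↦ Real.exp (-c * (n:ℝ)^2)) := sum_exp_nat hc
  have hSsh : Summable (fun n : ℕ ↦ Real.exp (-c * ((n:ℝ)+1)^2)) := by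
    have := (summable_nat_add_iff 1).mpr hS1
    simpa using this
  have hEexp : ∀ x : ℝ, Real.exp (-c * (x^2 - b^2)) = Real.exp (c*b^2) * Real.exp (-c * x^2) := by
    intro x; rw [← Real.exp_add]; ring_nf
  have hZsum : Summable (fun n : ℤ ↦ Real.exp (-c * ((n:ℝ)^2 - b^2))) := by
    apply Summable.of_nat_of_neg_add_one
    · simp_rw [Int.cast_natCast, hEexp]
      exact hS1.mul_left _
    · have : ∀ n : ℕ, Real.exp (-c * (((-(n+1):ℤ):ℝ)^2 - b^2))
          = Real.exp (c*b^2) * Real.exp (-c * ((n:ℝ)+1)^2) := by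
        intro n; push_cast; rw [← Real.exp_add]; ring_nf
      simp_rw [this]
      exact hSsh.mul_left _
  -- the complex series from Poisson summation
  set f : ℤ → ℂ := fun n ↦ Complex.exp (-↑π / ((L/(2*π) : ℝ):ℂ) * ((n:ℂ) + Complex.I * (b:ℝ))^2)
    with hfdef
  have hfeq : ∀ n : ℤ, f n = (Real.exp (-c * ((n:ℝ)^2 - b^2)) : ℂ)
      * Complex.exp ((-(2*c*(n:ℝ)*b) : ℝ) * Complex.I) := by
    intro n
    show Complex.exp _ = _
    rw [Complex.ofReal_exp, ← Complex.exp_add]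
    congr 1
    have hb2 : ((n:ℂ) + Complex.I * (b:ℝ))^2
        = (((n:ℝ)^2 - b^2 : ℝ) : ℂ) + ((2*(n:ℝ)*b : ℝ):ℂ) * Complex.I := by
      push_cast
      ring_nf
      rw [Complex.I_sq]
      ring
    rw [hb2]
    have hreal : -π / (L/(2*π)) = -c := by
      rw [hcdef]; field_simp
    have hca : -↑π / ((L/(2*π) : ℝ):ℂ) = ((-c : ℝ) : ℂ) := by
      rw [← hreal]; push_cast; ring
    rw [hca]
    push_cast
    ring
  have hfre : ∀ n : ℤ, (f n).re = Real.exp (-c * ((n:ℝ)^2 - b^2)) * Real.cos (2*π*(n:ℝ)*(1/2-θ)) := by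
    intro n
    rw [hfeq n, Complex.re_ofReal_mul, Complex.exp_ofReal_mul_I_re, Real.cos_neg]
    congr 2
    rw [hcdef, hbdef]
    field_simp
  have hfnorm : ∀ n : ℤ, ‖f n‖ = Real.exp (-c * ((n:ℝ)^2 - b^2)) := by
    intro n
    rw [hfeq n, norm_mul, Complex.norm_real, Real.norm_of_nonneg (Real.exp_pos _).le,
      Complex.norm_exp_ofReal_mul_I, mul_one]
  have hfsum : Summable f := by
    apply Summable.of_norm
    simpa only [hfnorm] using hZsum
  have ha' : (0:ℝ) < ((L/(2*π) : ℝ):ℂ).re := by simpa only [Complex.ofReal_re] using ha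
  have key := Complex.tsum_exp_neg_quadratic ha' ((b:ℝ):ℂ)
  have hLterm : ∀ n : ℤ, Complex.exp (-↑π * ((L/(2*π):ℝ):ℂ) * (n:ℂ)^2 + 2*↑π*((b:ℝ):ℂ)*(n:ℂ))
      = (((2:ℝ) ^ (-((n:ℝ) * ((n:ℝ) - 1)) / 2) * (2:ℝ) ^ (-θ * (n:ℝ)) : ℝ) : ℂ) := by
    intro n
    have h2 : (2:ℝ) ^ (-((n:ℝ) * ((n:ℝ) - 1)) / 2) * (2:ℝ) ^ (-θ * (n:ℝ))
        = Real.exp (L * (-((n:ℝ) * ((n:ℝ) - 1)) / 2 + -θ * (n:ℝ))) := by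
      rw [Real.rpow_def_of_pos two_pos, Real.rpow_def_of_pos two_pos, ← Real.exp_add, ← mul_add]
    have hrl : -π * (L/(2*π)) * (n:ℝ)^2 + 2*π*b*(n:ℝ)
        = L * (-((n:ℝ) * ((n:ℝ) - 1)) / 2 + -θ * (n:ℝ)) := by
      rw [hbdef]; field_simp; ring
    rw [h2, Complex.ofReal_exp]
    congr 1
    rw [show (-↑π * ((L/(2*π):ℝ):ℂ) * (n:ℂ)^2 + 2*↑π*((b:ℝ):ℂ)*(n:ℂ))
        = ((-π * (L/(2*π)) * (n:ℝ)^2 + 2*π*b*(n:ℝ) : ℝ) : ℂ) from by push_cast; ring, hrl]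
  have hsqrt : (1:ℂ) / ((L/(2*π):ℝ):ℂ) ^ ((1:ℂ)/2) = ((Real.sqrt (2*π/L) : ℝ) : ℂ) := by
    rw [show ((1:ℂ)/2) = (((1:ℝ)/2 : ℝ) : ℂ) by norm_num, ← Complex.ofReal_cpow ha.le,
      ← Complex.ofReal_one, ← Complex.ofReal_div]
    congr 1
    rw [Real.sqrt_eq_rpow, show (2*π/L) = (L/(2*π))⁻¹ from (inv_div _ _).symm,
      Real.inv_rpow ha.le, one_div]
  have hofReal : ((∑' n : ℤ, (2:ℝ)^(-((n:ℝ)*((n:ℝ)-1))/2) * (2:ℝ)^(-θ*(n:ℝ)) : ℝ) : ℂ)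
      = ((Real.sqrt (2*π/L) : ℝ) : ℂ) * ∑' n : ℤ, f n := by
    rw [Complex.ofReal_tsum]
    simp_rw [← hLterm]
    rw [key, hsqrt]
  have main := congrArg Complex.re hofReal
  rw [Complex.ofReal_re, Complex.re_ofReal_mul, Complex.re_tsum hfsum] at main
  simp_rw [hfre] at main
  -- now main : (real LHS) = √(2π/L) * ∑' n : ℤ, g n
  set g : ℤ → ℝ := fun n ↦ Real.exp (-c * ((n:ℝ)^2 - b^2)) * Real.cos (2*π*(n:ℝ)*(1/2-θ))
    with hgdef
  have hgb : ∀ x : ℝ, |Real.exp (-c * (x^2 - b^2)) * Real.cos (2*π*x*(1/2-θ))|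
      ≤ Real.exp (c*b^2) * Real.exp (-c * x^2) := by
    intro x
    rw [abs_mul, abs_of_pos (Real.exp_pos _), ← hEexp]
    calc Real.exp (-c * (x^2 - b^2)) * |Real.cos (2*π*x*(1/2-θ))|
        ≤ Real.exp (-c * (x^2 - b^2)) * 1 :=
          mul_le_mul_of_nonneg_left (Real.abs_cos_le_one _) (Real.exp_pos _).le
      _ = Real.exp (-c * (x^2 - b^2)) := mul_one _
  have hgnat : Summable (fun n : ℕ ↦ g (n:ℤ)) := by
    apply Summable.of_norm_bounded (hS1.mul_left (Real.exp (c*b^2)))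
    intro n
    simpa only [hgdef, Real.norm_eq_abs, Int.cast_natCast] using hgb (n:ℝ)
  have hgshift : Summable (fun n : ℕ ↦ g ((n:ℤ)+1)) := by
    apply Summable.of_norm_bounded (hSsh.mul_left (Real.exp (c*b^2)))
    intro n
    simpa only [hgdef, Real.norm_eq_abs, Int.cast_add, Int.cast_natCast, Int.cast_one]
      using hgb ((n:ℝ)+1)
  have heven : ∀ n : ℤ, g (-n) = g n := by
    intro n
    show Real.exp _ * Real.cos _ = _
    push_cast
    rw [show 2*π*(-(n:ℝ))*(1/2-θ) = -(2*π*(n:ℝ)*(1/2-θ)) by ring, Real.cos_neg, neg_sq]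
  have hgnegeq : ∀ n : ℕ, g (-((n:ℤ)+1)) = g ((n:ℤ)+1) := fun n ↦ heven _
  have hsplit : ∑' n : ℤ, g n = g 0 + 2 * ∑' n : ℕ, g ((n:ℤ)+1) := by
    have hneg : Summable (fun n : ℕ ↦ g (-((n:ℤ)+1))) := by
      simp_rw [hgnegeq]; exact hgshift
    rw [tsum_of_nat_of_neg_add_one hgnat hneg]
    have h0 : ∑' n : ℕ, g (n:ℤ) = g 0 + ∑' n : ℕ, g ((n:ℤ)+1) := by
      rw [Summable.tsum_eq_zero_add hgnat]
      congr 1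
    have h1 : ∑' n : ℕ, g (-((n:ℤ)+1)) = ∑' n : ℕ, g ((n:ℤ)+1) :=
      tsum_congr fun n ↦ hgnegeq n
    rw [h0, h1]
    ring
  have hg0 : g 0 = Real.exp (c*b^2) := by
    show Real.exp _ * Real.cos _ = _
    norm_num
  have hterm2 : ∀ n : ℕ, g ((n:ℤ)+1) = Real.exp (c*b^2) *
      (Real.exp (-2 * ((n:ℝ) + 1) ^ 2 * π ^ 2 / L) * Real.cos (2 * ((n:ℝ) + 1) * π * (1 / 2 - θ))) := by
    intro n
    show Real.exp _ * Real.cos _ = _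
    push_cast
    rw [hEexp, show -c * ((n:ℝ)+1)^2 = -2 * ((n:ℝ) + 1) ^ 2 * π ^ 2 / L from by
        rw [hcdef]; field_simp,
      show 2*π*((n:ℝ)+1)*(1/2-θ) = 2 * ((n:ℝ) + 1) * π * (1 / 2 - θ) from by ring]
    ring
  have hfactor : Real.exp (c*b^2) = (2:ℝ)^((1:ℝ)/8) * (2:ℝ)^(-θ*(1-θ)/2) := by
    rw [Real.rpow_def_of_pos two_pos, Real.rpow_def_of_pos two_pos, ← Real.exp_add]
    congr 1
    rw [hcdef, hbdef]
    field_simp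
    ring
  rw [main, hsplit, hg0]
  simp_rw [hterm2]
  rw [tsum_mul_left, hfactor]
  ring
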